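/- For every integer r ≥ 1, the equation ∫_0^1 (x + 1 − (1/r) Σ_{m=1}^r cos(2πmt))^{−1} dt = 1 has a unique solution x in (0,∞); writing this solution as x = 1/σ_r² with σ_r > 0, in the nearest-neighbour case r = 1 one has the explicit value σ_1² = √2 + 1. -/

import Mathlib

open MeasureTheory Real Filter Topology

noncomputable def Haux (t : ℝ) : ℝ :=
  t + (1/π) * Real.arctan (Real.sin (2*π*t) / (1 + Real.sqrt 2 - Real.cos (2*π*t)))

lemma sqrt2_gt_one : (1:ℝ) < Real.sqrt 2 := by
  nlinarith [Real.sqrt_nonneg 2, Real.sq_sqrt (show (0:ℝ) ≤ 2 by norm_num)]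

lemma hasDerivAt_Haux (t : ℝ) :
    HasDerivAt Haux ((Real.sqrt 2 - Real.cos (2*π*t))⁻¹) t := by
  have hπ : (π:ℝ) ≠ 0 := Real.pi_ne_zero
  set s := Real.sin (2*π*t) with hs
  set co := Real.cos (2*π*t) with hco
  have hco1 : co ≤ 1 := Real.cos_le_one _
  have hroot := sqrt2_gt_one
  have hden : (0:ℝ) < 1 + Real.sqrt 2 - co := by linarith
  have hθ : HasDerivAt (fun t : ℝ => 2*π*t) (2*π) t := by
    simpa using (hasDerivAt_id t).const_mul (2*π)
  have hsin : HasDerivAt (fun t : ℝ => Real.sin (2*π*t)) (Real.cos (2*π*t) * (2*π)) t :=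
    (Real.hasDerivAt_sin _).comp t hθ
  have hcos : HasDerivAt (fun t : ℝ => 1 + Real.sqrt 2 - Real.cos (2*π*t))
      (Real.sin (2*π*t) * (2*π)) t := by
    simpa using ((Real.hasDerivAt_cos _).comp t hθ).const_sub (1 + Real.sqrt 2)
  have hu : HasDerivAt (fun t : ℝ => Real.sin (2*π*t) / (1 + Real.sqrt 2 - Real.cos (2*π*t)))
      ((co * (2*π) * (1 + Real.sqrt 2 - co) - s * (s * (2*π))) / (1 + Real.sqrt 2 - co)^2) t :=
    hsin.div hcos (ne_of_gt hden)
  have harc := (Real.hasDerivAt_arctan (s / (1 + Real.sqrt 2 - co))).comp t hu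
  have hH : HasDerivAt Haux
      (1 + (1/π) * (1 / (1 + (s / (1 + Real.sqrt 2 - co))^2) *
        ((co * (2*π) * (1 + Real.sqrt 2 - co) - s * (s * (2*π))) / (1 + Real.sqrt 2 - co)^2))) t :=
    (hasDerivAt_id t).add (harc.const_mul (1/π))
  convert hH using 1
  have hd0 : (1 + Real.sqrt 2 - co) ≠ 0 := ne_of_gt hden
  have hpy : s^2 + co^2 = 1 := Real.sin_sq_add_cos_sq _
  have h2 : Real.sqrt 2 ^ 2 = 2 := Real.sq_sqrt (by norm_num)
  have hds : (0:ℝ) < (1 + Real.sqrt 2 - co)^2 + s^2 := by positivity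
  have key : (1/π) * (1 / (1 + (s / (1 + Real.sqrt 2 - co))^2) *
        ((co * (2*π) * (1 + Real.sqrt 2 - co) - s * (s * (2*π))) / (1 + Real.sqrt 2 - co)^2))
      = 2*(co*(1 + Real.sqrt 2 - co) - s^2)/((1 + Real.sqrt 2 - co)^2 + s^2) := by
    field_simp
  rw [key]
  have e1 : (1 + Real.sqrt 2 - co)^2 + s^2 = 2*(1+Real.sqrt 2)*(Real.sqrt 2 - co) := by
    linear_combination hpy - h2
  have e2 : co*(1 + Real.sqrt 2 - co) - s^2 = (1+Real.sqrt 2)*co - 1 := by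
    linear_combination - hpy
  rw [e1, e2, eq_comm, inv_eq_one_div]
  have h1s : (0:ℝ) < 1 + Real.sqrt 2 := by linarith
  have h2s : (0:ℝ) < Real.sqrt 2 - co := by linarith
  field_simp
  linear_combination h2

lemma integral_r1 : ∫ t in (0:ℝ)..1, (Real.sqrt 2 - Real.cos (2*π*t))⁻¹ = 1 := by
  have hcont : Continuous fun t : ℝ => (Real.sqrt 2 - Real.cos (2*π*t))⁻¹ := by
    apply Continuous.inv₀
    · fun_prop
    · intro t
      have h1 : Real.cos (2*π*t) ≤ 1 := Real.cos_le_one _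
      have := sqrt2_gt_one
      intro h; nlinarith
  rw [intervalIntegral.integral_eq_sub_of_hasDerivAt
    (fun t _ => hasDerivAt_Haux t) (hcont.intervalIntegrable 0 1)]
  simp [Haux, Real.sin_two_pi, Real.cos_two_pi]


noncomputable def frP (r : ℕ) (t : ℝ) : ℝ :=
  (1 / (r : ℝ)) * ∑ m ∈ Finset.Icc 1 r, Real.cos (2 * π * m * t)

noncomputable def FP (r : ℕ) (x : ℝ) : ℝ :=
  ∫ t in (0:ℝ)..1, (x + 1 - frP r t)⁻¹

variable {r : ℕ}

lemma frP_le_one (hr : 1 ≤ r) (t : ℝ) : frP r t ≤ 1 := by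
  have hr0 : (0:ℝ) < r := by exact_mod_cast hr
  have hsum : ∑ m ∈ Finset.Icc 1 r, Real.cos (2*π*m*t) ≤ (r:ℝ) := by
    calc ∑ m ∈ Finset.Icc 1 r, Real.cos (2*π*m*t) ≤ ∑ _m ∈ Finset.Icc 1 r, (1:ℝ) :=
          Finset.sum_le_sum (fun m _ => Real.cos_le_one _)
    _ = (r:ℝ) := by simp [Nat.card_Icc]
  have := mul_le_mul_of_nonneg_left hsum (show (0:ℝ) ≤ 1/(r:ℝ) by positivity)
  unfold frP
  calc (1/(r:ℝ)) * ∑ m ∈ Finset.Icc 1 r, Real.cos (2*π*m*t) ≤ (1/(r:ℝ)) * (r:ℝ) := this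
  _ = 1 := by field_simp

lemma neg_one_le_frP (hr : 1 ≤ r) (t : ℝ) : -1 ≤ frP r t := by
  have hr0 : (0:ℝ) < r := by exact_mod_cast hr
  have hsum : -(r:ℝ) ≤ ∑ m ∈ Finset.Icc 1 r, Real.cos (2*π*m*t) := by
    calc -(r:ℝ) = ∑ _m ∈ Finset.Icc 1 r, (-1:ℝ) := by simp [Nat.card_Icc]
    _ ≤ ∑ m ∈ Finset.Icc 1 r, Real.cos (2*π*m*t) :=
          Finset.sum_le_sum (fun m _ => Real.neg_one_le_cos _)
  have := mul_le_mul_of_nonneg_left hsum (show (0:ℝ) ≤ 1/(r:ℝ) by positivity)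
  unfold frP
  calc (-1:ℝ) = (1/(r:ℝ)) * (-(r:ℝ)) := by field_simp
  _ ≤ (1/(r:ℝ)) * ∑ m ∈ Finset.Icc 1 r, Real.cos (2*π*m*t) := this

lemma frP_lb (hr : 1 ≤ r) (t : ℝ) : 1 - 2*π^2*(r:ℝ)^2*t^2 ≤ frP r t := by
  have hr0 : (0:ℝ) < r := by exact_mod_cast hr
  have hterm : ∀ m ∈ Finset.Icc 1 r, (1 - 2*π^2*(r:ℝ)^2*t^2 : ℝ) ≤ Real.cos (2*π*m*t) := by
    intro m hm
    have hmr : (m:ℝ) ≤ (r:ℝ) := by exact_mod_cast (Finset.mem_Icc.mp hm).2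
    have hm0 : (0:ℝ) ≤ (m:ℝ) := by positivity
    have h1 : 1 - (2*π*m*t)^2/2 ≤ Real.cos (2*π*m*t) := Real.one_sub_sq_div_two_le_cos
    have hm2 : (m:ℝ)^2 ≤ (r:ℝ)^2 := by nlinarith
    have h3 : (0:ℝ) ≤ 2*π^2*t^2 := by positivity
    nlinarith [mul_le_mul_of_nonneg_left hm2 h3]
  have hsum : (r:ℝ)*(1 - 2*π^2*(r:ℝ)^2*t^2) ≤ ∑ m ∈ Finset.Icc 1 r, Real.cos (2*π*m*t) := by
    calc (r:ℝ)*(1 - 2*π^2*(r:ℝ)^2*t^2) = ∑ _m ∈ Finset.Icc 1 r, (1 - 2*π^2*(r:ℝ)^2*t^2 : ℝ) := by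
          simp [Nat.card_Icc]; ring
    _ ≤ _ := Finset.sum_le_sum hterm
  have := mul_le_mul_of_nonneg_left hsum (show (0:ℝ) ≤ 1/(r:ℝ) by positivity)
  unfold frP
  calc (1:ℝ) - 2*π^2*(r:ℝ)^2*t^2 = (1/(r:ℝ)) * ((r:ℝ)*(1 - 2*π^2*(r:ℝ)^2*t^2)) := by
        field_simp
  _ ≤ _ := this

lemma continuous_frP (r : ℕ) : Continuous (frP r) := by
  unfold frP
  exact continuous_const.mul (continuous_finset_sum _ (fun m _ =>
    Real.continuous_cos.comp (by fun_prop)))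

lemma denom_pos (hr : 1 ≤ r) {x : ℝ} (hx : 0 < x) (t : ℝ) : 0 < x + 1 - frP r t := by
  have := frP_le_one hr t; linarith

lemma denom_lt (hr : 1 ≤ r) (x : ℝ) (t : ℝ) : x + 1 - frP r t ≤ x + 2 := by
  have := neg_one_le_frP hr t; linarith

lemma cont_integrand (hr : 1 ≤ r) {x : ℝ} (hx : 0 < x) :
    Continuous fun t => (x + 1 - frP r t)⁻¹ :=
  (continuous_const.sub (continuous_frP r)).inv₀ (fun t => ne_of_gt (denom_pos hr hx t))

lemma integrable_integrand (hr : 1 ≤ r) {x : ℝ} (hx : 0 < x) (a b : ℝ) :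
    IntervalIntegrable (fun t => (x + 1 - frP r t)⁻¹) volume a b :=
  (cont_integrand hr hx).intervalIntegrable a b

lemma inv_sub_inv_pointwise (hr : 1 ≤ r) {x y : ℝ} (hx : 0 < x) (hy : 0 < y) (t : ℝ) :
    (x + 1 - frP r t)⁻¹ - (y + 1 - frP r t)⁻¹
      = (y - x) / ((x + 1 - frP r t) * (y + 1 - frP r t)) := by
  have h1 := denom_pos hr hx t
  have h2 := denom_pos hr hy t
  field_simp
  ring

lemma FP_strict_anti (hr : 1 ≤ r) {x y : ℝ} (hx : 0 < x) (hxy : x < y) :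
    FP r y < FP r x := by
  have hy : 0 < y := hx.trans hxy
  have gap : ∀ t ∈ Set.Icc (0:ℝ) 1,
      (y - x) / ((x+2)*(y+2)) ≤ (x + 1 - frP r t)⁻¹ - (y + 1 - frP r t)⁻¹ := by
    intro t _
    rw [inv_sub_inv_pointwise hr hx hy t]
    have h1 := denom_pos hr hx t
    have h2 := denom_pos hr hy t
    have h3 := denom_lt hr x t
    have h4 := denom_lt hr y t
    gcongr
    all_goals nlinarith [mul_pos h1 h2, h1, h2, h3, h4]
  have hint := (integrable_integrand hr hx 0 1).sub (integrable_integrand hr hy 0 1)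
  have hmono := intervalIntegral.integral_mono_on (by norm_num : (0:ℝ) ≤ 1)
    (intervalIntegrable_const) hint gap
  rw [intervalIntegral.integral_const] at hmono
  rw [intervalIntegral.integral_sub (integrable_integrand hr hx 0 1)
    (integrable_integrand hr hy 0 1)] at hmono
  have hpos : 0 < (y - x) / ((x+2)*(y+2)) := by
    apply div_pos (by linarith) (by nlinarith)
  have : (0:ℝ) < FP r x - FP r y := by
    have := hmono
    simp only [smul_eq_mul] at this
    unfold FP
    nlinarith
  linarith

lemma FP_two_lt_one (hr : 1 ≤ r) : FP r 2 < 1 := by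
  have hub : ∀ t ∈ Set.Icc (0:ℝ) 1, ((2:ℝ) + 1 - frP r t)⁻¹ ≤ (1:ℝ)/2 := by
    intro t _
    have h1 := frP_le_one hr t
    rw [show (1:ℝ)/2 = (2:ℝ)⁻¹ by norm_num]
    apply inv_anti₀ (by norm_num)
    linarith
  have := intervalIntegral.integral_mono_on (by norm_num : (0:ℝ) ≤ 1)
    (integrable_integrand hr (by norm_num : (0:ℝ) < 2) 0 1) intervalIntegrable_const hub
  rw [intervalIntegral.integral_const] at this
  simp only [smul_eq_mul] at this
  unfold FP
  nlinarith

lemma pi_sq_big : (9:ℝ) < π^2 := by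
  nlinarith [Real.pi_gt_three]

lemma FP_big (hr : 1 ≤ r) :
    (4:ℝ)/3 ≤ FP r (1/(8*(2*π^2*(r:ℝ)^2))) := by
  set K : ℝ := 2*π^2*(r:ℝ)^2 with hKdef
  have hr0 : (1:ℝ) ≤ r := by exact_mod_cast hr
  have hK1 : (1:ℝ) < K := by
    have := pi_sq_big
    have : (18:ℝ) ≤ K := by rw [hKdef]; nlinarith
    linarith
  have hK0 : (0:ℝ) < K := by linarith
  set x₀ : ℝ := 1/(8*K) with hx₀def
  have hx₀ : 0 < x₀ := by positivity
  set δ : ℝ := 1/(4*K) with hδdef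
  have hδ0 : 0 < δ := by positivity
  have hδ1 : δ ≤ 1 := by
    rw [hδdef]; rw [div_le_one (by linarith)]; linarith
  -- pointwise bound on [0, δ]
  have hptw : ∀ t ∈ Set.Icc (0:ℝ) δ, (16*K/3 : ℝ) ≤ (x₀ + 1 - frP r t)⁻¹ := by
    intro t ht
    obtain ⟨ht0, htδ⟩ := ht
    have hlb := frP_lb hr t
    have ht2 : t^2 ≤ δ^2 := by nlinarith
    have hden : x₀ + 1 - frP r t ≤ 3/(16*K) := by
      have h1 : K * t^2 ≤ K * δ^2 := by nlinarith
      have h2 : K * δ^2 = 1/(16*K) := by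
        rw [hδdef]; field_simp; ring
      have : 1 - frP r t ≤ K * t^2 := by
        have : 2*π^2*(r:ℝ)^2*t^2 = K * t^2 := by rw [hKdef]
        linarith [frP_lb hr t]
      rw [hx₀def]
      have : x₀ + 1 - frP r t ≤ 1/(8*K) + 1/(16*K) := by
        rw [hx₀def] at *
        linarith
      rw [← hx₀def]
      calc x₀ + 1 - frP r t ≤ 1/(8*K) + 1/(16*K) := this
      _ = 3/(16*K) := by field_simp; ring
    have hdpos : 0 < x₀ + 1 - frP r t := denom_pos hr hx₀ t
    have h3 : (3/(16*K))⁻¹ ≤ (x₀ + 1 - frP r t)⁻¹ := inv_anti₀ hdpos hden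
    have h4 : (3/(16*K) : ℝ)⁻¹ = 16*K/3 := by field_simp
    linarith
  have hi1 := integrable_integrand hr hx₀ 0 δ
  have hi2 := integrable_integrand hr hx₀ δ 1
  have hmono := intervalIntegral.integral_mono_on (le_of_lt hδ0)
    intervalIntegrable_const hi1 hptw
  rw [intervalIntegral.integral_const] at hmono
  simp only [smul_eq_mul, sub_zero] at hmono
  have hδval : δ * (16*K/3) = 4/3 := by
    rw [hδdef]; field_simp; ring
  have h2nn : 0 ≤ ∫ t in δ..1, (x₀ + 1 - frP r t)⁻¹ :=
    intervalIntegral.integral_nonneg hδ1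
      (fun t _ => le_of_lt (inv_pos.mpr (denom_pos hr hx₀ t)))
  have hsplit := intervalIntegral.integral_add_adjacent_intervals hi1 hi2
  unfold FP
  rw [← hsplit]
  linarith [hmono, h2nn, hδval.ge, hδval.le]

lemma FP_lipschitz (hr : 1 ≤ r) {x₀ : ℝ} (hx₀ : 0 < x₀) :
    ContinuousOn (FP r) (Set.Ici x₀) := by
  have hK : LipschitzOnWith (⟨x₀⁻¹*x₀⁻¹, by positivity⟩ : NNReal) (FP r) (Set.Ici x₀) := by
    apply LipschitzOnWith.of_dist_le_mul
    intro x hx y hy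
    simp only [Set.mem_Ici] at hx hy
    have hxp : 0 < x := lt_of_lt_of_le hx₀ hx
    have hyp : 0 < y := lt_of_lt_of_le hx₀ hy
    have hdiff : FP r x - FP r y
        = ∫ t in (0:ℝ)..1, ((x + 1 - frP r t)⁻¹ - (y + 1 - frP r t)⁻¹) := by
      unfold FP
      rw [intervalIntegral.integral_sub (integrable_integrand hr hxp 0 1)
        (integrable_integrand hr hyp 0 1)]
    have hbound : ∀ t ∈ Set.uIoc (0:ℝ) 1,
        ‖(x + 1 - frP r t)⁻¹ - (y + 1 - frP r t)⁻¹‖ ≤ x₀⁻¹*x₀⁻¹ * |x - y| := by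
      intro t _
      rw [inv_sub_inv_pointwise hr hxp hyp t, Real.norm_eq_abs, abs_div, abs_mul]
      have h1 := denom_pos hr hxp t
      have h2 := denom_pos hr hyp t
      have h1' : x₀ ≤ x + 1 - frP r t := by
        have := frP_le_one hr t; linarith
      have h2' : x₀ ≤ y + 1 - frP r t := by
        have := frP_le_one hr t; linarith
      rw [abs_of_pos h1, abs_of_pos h2]
      rw [div_le_iff₀ (by positivity)]
      have hxy : |y - x| = |x - y| := abs_sub_comm y x
      rw [hxy]
      have hinv : x₀⁻¹*x₀⁻¹ * |x-y| * ((x + 1 - frP r t) * (y + 1 - frP r t))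
          ≥ x₀⁻¹*x₀⁻¹ * |x-y| * (x₀ * x₀) := by
        gcongr
        all_goals first
          | positivity
          | exact hx₀
          | exact h1'
          | exact h2'
          | exact hx₀.le.trans h1'
          | exact hx₀.le.trans h2'
      have : x₀⁻¹*x₀⁻¹ * |x-y| * (x₀ * x₀) = |x-y| := by
        field_simp
      linarith
    have := intervalIntegral.norm_integral_le_of_norm_le_const hbound
    rw [← hdiff] at this
    rw [Real.dist_eq, Real.dist_eq]
    push_cast
    simp only [Real.norm_eq_abs] at this
    calc |FP r x - FP r y| ≤ x₀⁻¹*x₀⁻¹*|x-y| * |1 - (0:ℝ)| := this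
    _ = x₀⁻¹*x₀⁻¹*|x-y| := by norm_num
  exact hK.continuousOn

lemma FP_exists_unique (hr : 1 ≤ r) : ∃! x : ℝ, 0 < x ∧ FP r x = 1 := by
  have hr0 : (0:ℝ) < r := by exact_mod_cast hr
  set K : ℝ := 2*π^2*(r:ℝ)^2 with hKdef
  have hK1 : (1:ℝ) < K := by
    have h9 := pi_sq_big
    have hr1 : (1:ℝ) ≤ (r:ℝ) := by exact_mod_cast hr
    rw [hKdef]; nlinarith
  have hK0 : (0:ℝ) < K := by linarith
  set x₀ : ℝ := 1/(8*K) with hx₀def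
  have hx₀p : 0 < x₀ := by positivity
  have hx₀2 : x₀ ≤ 2 := by
    rw [hx₀def, div_le_iff₀ (by linarith)]; nlinarith
  have hcont : ContinuousOn (FP r) (Set.Icc x₀ 2) :=
    (FP_lipschitz hr hx₀p).mono (fun z hz => hz.1)
  have hsub := intermediate_value_Icc' hx₀2 hcont
  have hbig : (4:ℝ)/3 ≤ FP r x₀ := FP_big hr
  have h1mem : (1:ℝ) ∈ Set.Icc (FP r 2) (FP r x₀) :=
    ⟨le_of_lt (FP_two_lt_one hr), by linarith⟩
  obtain ⟨x, hxmem, hFx⟩ := hsub h1mem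
  have hxpos : 0 < x := lt_of_lt_of_le hx₀p hxmem.1
  refine ⟨x, ⟨hxpos, hFx⟩, ?_⟩
  rintro y ⟨hy, hFy⟩
  by_contra hne
  rcases lt_or_gt_of_ne hne with h | h
  · have := FP_strict_anti hr hy h
    rw [hFx, hFy] at this; exact lt_irrefl 1 this
  · have := FP_strict_anti hr hxpos h
    rw [hFx, hFy] at this; exact lt_irrefl 1 this

/-- For every `r ≥ 1`, the equation
`∫_0^1 (x + 1 - (1/r) ∑_{m=1}^r cos(2πmt))⁻¹ dt = 1` has a unique solution `x ∈ (0,∞)`;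
moreover, in the nearest-neighbour case `r = 1`, this unique solution is `x = 1/(√2+1)`,
that is, writing `x = 1/σ_r²` with `σ_r > 0`, one has `σ_1² = √2 + 1`. -/
theorem sigma_r_characterization :
    (∀ r : ℕ, 1 ≤ r →
      ∃! x : ℝ, 0 < x ∧
        ∫ t in (0:ℝ)..1,
          (x + 1 - (1 / (r : ℝ)) * ∑ m ∈ Finset.Icc 1 r, Real.cos (2 * π * m * t))⁻¹ = 1) ∧
    (∫ t in (0:ℝ)..1,
        (1 / (Real.sqrt 2 + 1) + 1 - (1 / (1 : ℝ)) *
          ∑ m ∈ Finset.Icc (1:ℕ) 1, Real.cos (2 * π * m * t))⁻¹ = 1) := by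
  constructor
  · intro r hr
    exact FP_exists_unique hr
  · have h2 : Real.sqrt 2 ^ 2 = 2 := Real.sq_sqrt (by norm_num)
    have hEq : ∀ t : ℝ, (1/(Real.sqrt 2 + 1) + 1 - (1/(1:ℝ)) *
        ∑ m ∈ Finset.Icc (1:ℕ) 1, Real.cos (2*π*m*t)) = Real.sqrt 2 - Real.cos (2*π*t) := by
      intro t
      rw [Finset.Icc_self, Finset.sum_singleton]
      have h12 : (1:ℝ)/(Real.sqrt 2 + 1) = Real.sqrt 2 - 1 := by
        rw [div_eq_iff (by positivity)]
        linear_combination -h2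
      push_cast
      rw [h12]
      ring_nf
    simp only [hEq]
    exact integral_r1
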